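/- Let K be an N×N Hermitian complex matrix. There exists a determinantal point process on the finite set X = {1,...,N} with kernel matrix K (i.e., a random subset S of X such that P(A ⊆ S) = det(K_A) for every subset A of X) if and only if all eigenvalues of K lie in the interval [0,1], i.e., 0 ≼ K ≼ I in the positive-semidefinite order. -/

import Mathlib

set_option maxHeartbeats 1600000

open scoped Classical ComplexOrder

/-- The principal submatrix of `K` with rows and columns indexed by the finite set `A`. -/
noncomputable def dppSubmatrix {N : ℕ} (K : Matrix (Fin N) (Fin N) ℂ) (A : Finset (Fin N)) :
    Matrix A A ℂ :=
  K.submatrix (fun i : A => (i : Fin N)) (fun j : A => (j : Fin N))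

section MacchiSoshnikovAux

open Matrix Finset

variable {N : ℕ}

/-- The mixed matrix whose rows in `T` come from `K` and rows outside `T` from `1 - K`. -/
noncomputable def mixM (K : Matrix (Fin N) (Fin N) ℂ) (T : Finset (Fin N)) :
    Matrix (Fin N) (Fin N) ℂ :=
  Matrix.of fun i j => if i ∈ T then K i j else (1 - K) i j

lemma det_ite_mem (K : Matrix (Fin N) (Fin N) ℂ) (A : Finset (Fin N)) :
    (Matrix.of fun i j => if i ∈ A then K i j else (1 : Matrix (Fin N) (Fin N) ℂ) i j).det
      = (dppSubmatrix K A).det := by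
  rw [← Matrix.det_submatrix_equiv_self (Equiv.sumCompl (· ∈ A))]
  have h : ((Matrix.of fun i j => if i ∈ A then K i j else (1 : Matrix (Fin N) (Fin N) ℂ) i j).submatrix
      (Equiv.sumCompl (· ∈ A)) (Equiv.sumCompl (· ∈ A)))
      = Matrix.fromBlocks (dppSubmatrix K A)
          (K.submatrix (fun i : {x // x ∈ A} => (i : Fin N)) (fun j : {x // ¬ x ∈ A} => (j : Fin N)))
          0 1 := by
    ext i j
    rcases i with ⟨i, hi⟩ | ⟨i, hi⟩ <;> rcases j with ⟨j, hj⟩ | ⟨j, hj⟩ <;>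
        simp [dppSubmatrix, Matrix.one_apply, hi, hj, Subtype.ext_iff]
    rintro rfl; exact hi hj
  rw [h, Matrix.det_fromBlocks_zero₂₁, Matrix.det_one, mul_one]

/-- Identity (I): ∑_{T ⊇ A} det (mixM K T) = det K_A. -/
lemma sum_mix_superset (K : Matrix (Fin N) (Fin N) ℂ) (A : Finset (Fin N)) :
    ∑ T ∈ Finset.univ.filter (fun T => A ⊆ T), (mixM K T).det
      = (dppSubmatrix K A).det := by
  classical
  rw [← det_ite_mem]
  have key : (Matrix.of fun i j => if i ∈ A then K i j else (1 : Matrix (Fin N) (Fin N) ℂ) i j)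
      = Matrix.of ((fun i => K i) + fun i => if i ∈ A then (0 : Fin N → ℂ) else (1 - K) i) := by
    ext i j
    by_cases hi : i ∈ A <;> simp [hi, Matrix.one_apply, Matrix.sub_apply]
  rw [key]
  have expand := (Matrix.detRowAlternating (R := ℂ) (n := Fin N)).toMultilinearMap.map_add_univ
    (fun i => K i) (fun i => if i ∈ A then (0 : Fin N → ℂ) else (1 - K) i)
  have hdet : (Matrix.of ((fun i => K i) + fun i => if i ∈ A then (0 : Fin N → ℂ) else (1 - K) i)).det
      = ∑ s : Finset (Fin N),
        Matrix.detRowAlternating (s.piecewise (fun i => K i)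
          (fun i => if i ∈ A then (0 : Fin N → ℂ) else (1 - K) i)) := expand
  rw [hdet]
  rw [Finset.sum_filter]
  apply Finset.sum_congr rfl
  intro s _
  by_cases hs : A ⊆ s
  · simp only [hs, if_true]
    congr 1
    ext i j
    by_cases hi : i ∈ s
    · rw [Finset.piecewise_eq_of_mem _ _ _ hi]; simp [mixM, hi]
    · have hiA : i ∉ A := fun h => hi (hs h)
      rw [Finset.piecewise_eq_of_notMem _ _ _ hi]; simp [mixM, hi, hiA]
  · simp only [hs, if_false]
    obtain ⟨i, hiA, his⟩ := Finset.not_subset.mp hs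
    refine Eq.symm <| (Matrix.detRowAlternating (R := ℂ) (n := Fin N)).toMultilinearMap.map_coord_zero
      (m := s.piecewise (fun i => K i) (fun i => if i ∈ A then (0 : Fin N → ℂ) else (1 - K) i)) i ?_
    rw [Finset.piecewise_eq_of_notMem _ _ _ his]; simp [hiA]

/-- mixM of the complementary kernel is mixM of the complementary set. -/
lemma mixM_one_sub (K : Matrix (Fin N) (Fin N) ℂ) (T : Finset (Fin N)) :
    mixM (1 - K) T = mixM K Tᶜ := by
  ext i j
  by_cases hi : i ∈ T <;> simp [mixM, hi, Finset.mem_compl]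

/-- det (K + t • 1) = ∑_s t^(N - #s) * det K_s -/
lemma det_add_smul_one (K : Matrix (Fin N) (Fin N) ℂ) (t : ℂ) :
    (K + t • (1 : Matrix (Fin N) (Fin N) ℂ)).det
      = ∑ s : Finset (Fin N), t ^ (N - s.card) * (dppSubmatrix K s).det := by
  classical
  have key : (K + t • (1 : Matrix (Fin N) (Fin N) ℂ))
      = Matrix.of ((fun i => K i) + fun i => t • (1 : Matrix (Fin N) (Fin N) ℂ) i) := by
    ext i j; simp
  rw [key]
  have expand := (Matrix.detRowAlternating (R := ℂ) (n := Fin N)).toMultilinearMap.map_add_univ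
    (fun i => K i) (fun i => t • (1 : Matrix (Fin N) (Fin N) ℂ) i)
  have hdet : (Matrix.of ((fun i => K i) + fun i => t • (1 : Matrix (Fin N) (Fin N) ℂ) i)).det
      = ∑ s : Finset (Fin N),
        Matrix.detRowAlternating (s.piecewise (fun i => K i)
          (fun i => t • (1 : Matrix (Fin N) (Fin N) ℂ) i)) := expand
  rw [hdet]
  apply Finset.sum_congr rfl
  intro s _
  -- rewrite piecewise as (fun i => c i • m i) with c = ite, m = piecewise s K 1
  have hrow : s.piecewise (fun i => K i) (fun i => t • (1 : Matrix (Fin N) (Fin N) ℂ) i)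
      = fun i => (if i ∈ s then (1:ℂ) else t) •
          (s.piecewise (fun i => K i) (fun i => (1 : Matrix (Fin N) (Fin N) ℂ) i)) i := by
    funext i
    by_cases hi : i ∈ s
    · rw [Finset.piecewise_eq_of_mem _ _ _ hi, Finset.piecewise_eq_of_mem _ _ _ hi]
      simp [hi]
    · rw [Finset.piecewise_eq_of_notMem _ _ _ hi, Finset.piecewise_eq_of_notMem _ _ _ hi]
      simp [hi]
  rw [hrow]
  have hsmul := (Matrix.detRowAlternating (R := ℂ) (n := Fin N)).toMultilinearMap.map_smul_univ
    (fun i => if i ∈ s then (1:ℂ) else t)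
    (s.piecewise (fun i => K i) (fun i => (1 : Matrix (Fin N) (Fin N) ℂ) i))
  refine Eq.trans hsmul ?_
  have hprod : (∏ i : Fin N, if i ∈ s then (1:ℂ) else t) = t ^ (N - s.card) := by
    rw [← Finset.prod_filter_mul_prod_filter_not Finset.univ (· ∈ s)]
    have h1 : ∀ i ∈ Finset.univ.filter (· ∈ s), (if i ∈ s then (1:ℂ) else t) = 1 := by
      intro i hi; simp [Finset.mem_filter.mp hi |>.2]
    have h2 : ∀ i ∈ Finset.univ.filter (¬ · ∈ s), (if i ∈ s then (1:ℂ) else t) = t := by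
      intro i hi; simp [Finset.mem_filter.mp hi |>.2]
    rw [Finset.prod_congr rfl h1, Finset.prod_congr rfl h2, Finset.prod_const, Finset.prod_const]
    simp only [one_pow, one_mul]
    congr 1
    rw [Finset.filter_not, Finset.card_sdiff_of_subset (Finset.filter_subset _ _), Finset.filter_univ_mem,
      Finset.card_univ, Fintype.card_fin]
  have hpw : (Matrix.detRowAlternating (R := ℂ) (n := Fin N)).toMultilinearMap
      (s.piecewise (fun i => K i) (fun i => (1 : Matrix (Fin N) (Fin N) ℂ) i))
      = (dppSubmatrix K s).det := by
    have hm : s.piecewise (fun i => K i) (fun i => (1 : Matrix (Fin N) (Fin N) ℂ) i)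
        = fun i j => if i ∈ s then K i j else (1 : Matrix (Fin N) (Fin N) ℂ) i j := by
      funext i j
      by_cases hi : i ∈ s
      · rw [Finset.piecewise_eq_of_mem _ _ _ hi]; simp [hi]
      · rw [Finset.piecewise_eq_of_notMem _ _ _ hi]; simp [hi]
    rw [hm]
    exact det_ite_mem K s
  rw [hprod, hpw, smul_eq_mul]

lemma sum_filter_superset_split (F : Finset (Fin N) → ℂ) (A : Finset (Fin N)) :
    ∑ S ∈ Finset.univ.filter (fun S => A ⊆ S), F S
      = F A + ∑ S ∈ Finset.univ.filter (fun S => A ⊂ S), F S := by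
  have h : Finset.univ.filter (fun S => A ⊆ S)
      = insert A (Finset.univ.filter (fun S => A ⊂ S)) := by
    ext S
    simp only [Finset.mem_filter, Finset.mem_univ, true_and, Finset.mem_insert]
    constructor
    · intro h
      rcases eq_or_lt_of_le (le_iff_subset.mpr h) with h' | h'
      · exact Or.inl h'.symm
      · exact Or.inr h'
    · rintro (rfl | h)
      · exact Finset.Subset.refl _
      · exact h.subset
  rw [h, Finset.sum_insert (by simp [ssubset_irrfl])]

lemma mobius_eq (f g : Finset (Fin N) → ℂ)
    (h : ∀ A : Finset (Fin N), ∑ S ∈ Finset.univ.filter (fun S => A ⊆ S), f S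
      = ∑ S ∈ Finset.univ.filter (fun S => A ⊆ S), g S) :
    ∀ A, f A = g A := by
  suffices H : ∀ n (A : Finset (Fin N)), N ≤ A.card + n → f A = g A by
    intro A
    exact H N A (by omega)
  intro n
  induction n with
  | zero =>
    intro A hA
    have hA' : A = Finset.univ := by
      apply Finset.eq_univ_of_card
      have := Finset.card_le_univ A
      simp only [Finset.card_univ, Fintype.card_fin] at *
      omega
    subst hA'
    have key := h Finset.univ
    rw [sum_filter_superset_split, sum_filter_superset_split] at key
    have : Finset.univ.filter (fun S => Finset.univ ⊂ S) = (∅ : Finset (Finset (Fin N))) := by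
      apply Finset.filter_false_of_mem
      intro S _
      intro hc
      exact absurd (Finset.subset_univ S) (by simpa using hc.not_subset)
    simpa [this] using key
  | succ n ih =>
    intro A hA
    have key := h A
    rw [sum_filter_superset_split, sum_filter_superset_split] at key
    have heq : ∑ S ∈ Finset.univ.filter (fun S => A ⊂ S), f S
        = ∑ S ∈ Finset.univ.filter (fun S => A ⊂ S), g S := by
      apply Finset.sum_congr rfl
      intro S hS
      have hAS : A ⊂ S := (Finset.mem_filter.mp hS).2
      exact ih S (by have := Finset.card_lt_card hAS; omega)
    rw [heq] at key
    exact add_right_cancel key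

lemma posSemidef_real_smul {M : Matrix (Fin N) (Fin N) ℂ} (hM : M.PosSemidef)
    {c : ℝ} (hc : 0 ≤ c) : (((c : ℂ)) • M).PosSemidef := by
  refine Matrix.PosSemidef.of_dotProduct_mulVec_nonneg ?_ ?_
  · unfold Matrix.IsHermitian
    rw [Matrix.conjTranspose_smul, hM.1.eq]
    congr 1
    simp [Complex.ext_iff]
  · intro x
    rw [Matrix.smul_mulVec, dotProduct_smul, smul_eq_mul]
    exact mul_nonneg (Complex.zero_le_real.mpr hc) (hM.dotProduct_mulVec_nonneg x)

lemma posDef_real_smul_one {c : ℝ} (hc : 0 < c) :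
    (((c : ℂ)) • (1 : Matrix (Fin N) (Fin N) ℂ)).PosDef := by
  have : ((c : ℂ)) • (1 : Matrix (Fin N) (Fin N) ℂ) = Matrix.diagonal (fun _ => (c : ℂ)) := by
    ext i j
    by_cases h : i = j <;> simp [Matrix.one_apply, Matrix.diagonal, h]
  rw [this]
  exact Matrix.posDef_diagonal_iff.mpr fun _ => Complex.zero_lt_real.mpr hc


lemma posDef_conj_of_injective {n m : Type*} [Fintype n] [Fintype m] [DecidableEq n]
    {M : Matrix n n ℂ} (hM : M.PosDef) (B : Matrix n m ℂ)
    (hB : ∀ x : m → ℂ, B *ᵥ x = 0 → x = 0) : (Bᴴ * M * B).PosDef := by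
  refine Matrix.PosDef.of_dotProduct_mulVec_pos ?_ ?_
  · exact Matrix.isHermitian_conjTranspose_mul_mul B hM.1
  · intro x hx
    have hBx : B *ᵥ x ≠ 0 := fun h => hx (hB x h)
    simpa only [star_mulVec, dotProduct_mulVec, vecMul_vecMul] using hM.dotProduct_mulVec_pos hBx

lemma posDef_submatrix_inj {n' : Type*} [Fintype n'] {M : Matrix (Fin N) (Fin N) ℂ}
    (hM : M.PosDef) (e : n' → Fin N) (he : Function.Injective e) :
    (M.submatrix e e).PosDef := by
  have hfact : M.submatrix e e
      = ((1 : Matrix (Fin N) (Fin N) ℂ).submatrix id e)ᴴ * M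
          * ((1 : Matrix (Fin N) (Fin N) ℂ).submatrix id e) := by
    rw [(by simp : M = 1 * M * 1), Matrix.submatrix_mul (he₂ := Function.bijective_id),
      Matrix.submatrix_mul (he₂ := Function.bijective_id), Matrix.submatrix_id_id]
    simp only [Matrix.conjTranspose_submatrix, Matrix.conjTranspose_one]
    rw [Matrix.one_mul, Matrix.mul_one]
  rw [hfact]
  apply posDef_conj_of_injective hM
  intro x hx
  funext i
  have h1 : (((1 : Matrix (Fin N) (Fin N) ℂ).submatrix id e) *ᵥ x) (e i) = x i := by
    simp only [Matrix.mulVec, dotProduct, Matrix.submatrix_apply, id_eq]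
    rw [Finset.sum_eq_single i]
    · simp [Matrix.one_apply]
    · intro b _ hb
      have hne : e i ≠ e b := fun h => hb (he h).symm
      simp [Matrix.one_apply, hne]
    · simp
  show x i = 0
  rw [← h1, hx]
  simp

lemma sign_det_sub_proj_pos (P : Matrix (Fin N) (Fin N) ℂ) (hPD : P.PosDef)
    (hPD1 : (1 - P).PosDef) (T : Finset (Fin N)) :
    0 < (-1 : ℂ)^((Finset.univ.filter (fun i : Fin N => ¬ i ∈ T)).card)
      * (P - Matrix.diagonal (fun i => if i ∈ T then (0:ℂ) else 1)).det := by
  set m := (Finset.univ.filter (fun i : Fin N => ¬ i ∈ T)).card with hm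
  have hPH : P.IsHermitian := hPD.1
  have hinj1 : Function.Injective (fun i : {x // x ∈ T} => (i : Fin N)) :=
    fun a b h => Subtype.ext h
  have hinj2 : Function.Injective (fun i : {x // ¬ x ∈ T} => (i : Fin N)) :=
    fun a b h => Subtype.ext h
  have hA₁PD : (P.submatrix (fun i : {x // x ∈ T} => (i : Fin N))
      (fun j : {x // x ∈ T} => (j : Fin N))).PosDef := posDef_submatrix_inj hPD _ hinj1
  haveI : Invertible (P.submatrix (fun i : {x // x ∈ T} => (i : Fin N))
      (fun j : {x // x ∈ T} => (j : Fin N))) :=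
    Matrix.invertibleOfIsUnitDet _ (isUnit_iff_ne_zero.mpr (ne_of_gt hA₁PD.det_pos))
  have hblocks : (P - Matrix.diagonal (fun i => if i ∈ T then (0:ℂ) else 1)).submatrix
        (Equiv.sumCompl (· ∈ T)) (Equiv.sumCompl (· ∈ T))
      = Matrix.fromBlocks
          (P.submatrix (fun i : {x // x ∈ T} => (i : Fin N)) (fun j : {x // x ∈ T} => (j : Fin N)))
          (P.submatrix (fun i : {x // x ∈ T} => (i : Fin N)) (fun j : {x // ¬ x ∈ T} => (j : Fin N)))
          (P.submatrix (fun i : {x // ¬ x ∈ T} => (i : Fin N)) (fun j : {x // x ∈ T} => (j : Fin N)))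
          (P.submatrix (fun i : {x // ¬ x ∈ T} => (i : Fin N)) (fun j : {x // ¬ x ∈ T} => (j : Fin N)) - 1) := by
    ext i j
    rcases i with ⟨i, hi⟩ | ⟨i, hi⟩ <;> rcases j with ⟨j, hj⟩ | ⟨j, hj⟩ <;>
      simp [Matrix.sub_apply, Matrix.diagonal_apply, Matrix.one_apply, Subtype.ext_iff, hi, hj] <;>
      (intro h; subst h; exact absurd hj hi)
  have hdetP : (P - Matrix.diagonal (fun i => if i ∈ T then (0:ℂ) else 1)).det
      = (P.submatrix (fun i : {x // x ∈ T} => (i : Fin N)) (fun j : {x // x ∈ T} => (j : Fin N))).det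
        * ((P.submatrix (fun i : {x // ¬ x ∈ T} => (i : Fin N)) (fun j : {x // ¬ x ∈ T} => (j : Fin N)) - 1)
          - (P.submatrix (fun i : {x // ¬ x ∈ T} => (i : Fin N)) (fun j : {x // x ∈ T} => (j : Fin N)))
            * (⅟(P.submatrix (fun i : {x // x ∈ T} => (i : Fin N)) (fun j : {x // x ∈ T} => (j : Fin N))))
            * (P.submatrix (fun i : {x // x ∈ T} => (i : Fin N)) (fun j : {x // ¬ x ∈ T} => (j : Fin N)))).det := by
    rw [← Matrix.det_submatrix_equiv_self (Equiv.sumCompl (· ∈ T)), hblocks,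
      Matrix.det_fromBlocks₁₁]
  have hC : P.submatrix (fun i : {x // ¬ x ∈ T} => (i : Fin N)) (fun j : {x // x ∈ T} => (j : Fin N))
      = (P.submatrix (fun i : {x // x ∈ T} => (i : Fin N)) (fun j : {x // ¬ x ∈ T} => (j : Fin N)))ᴴ := by
    ext i j
    simp only [Matrix.conjTranspose_apply, Matrix.submatrix_apply]
    exact (hPH.apply _ _).symm
  have hWPD : ((1 - P).submatrix (fun i : {x // ¬ x ∈ T} => (i : Fin N)) (fun j : {x // ¬ x ∈ T} => (j : Fin N))
      + (P.submatrix (fun i : {x // x ∈ T} => (i : Fin N)) (fun j : {x // ¬ x ∈ T} => (j : Fin N)))ᴴ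
        * (P.submatrix (fun i : {x // x ∈ T} => (i : Fin N)) (fun j : {x // x ∈ T} => (j : Fin N)))⁻¹
        * (P.submatrix (fun i : {x // x ∈ T} => (i : Fin N)) (fun j : {x // ¬ x ∈ T} => (j : Fin N)))).PosDef := by
    apply Matrix.PosDef.add_posSemidef (posDef_submatrix_inj hPD1 _ hinj2)
    exact (hA₁PD.inv.posSemidef).conjTranspose_mul_mul_same _
  have hSchur : (P.submatrix (fun i : {x // ¬ x ∈ T} => (i : Fin N)) (fun j : {x // ¬ x ∈ T} => (j : Fin N)) - 1)
      - (P.submatrix (fun i : {x // ¬ x ∈ T} => (i : Fin N)) (fun j : {x // x ∈ T} => (j : Fin N)))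
        * (⅟(P.submatrix (fun i : {x // x ∈ T} => (i : Fin N)) (fun j : {x // x ∈ T} => (j : Fin N))))
        * (P.submatrix (fun i : {x // x ∈ T} => (i : Fin N)) (fun j : {x // ¬ x ∈ T} => (j : Fin N)))
      = -((1 - P).submatrix (fun i : {x // ¬ x ∈ T} => (i : Fin N)) (fun j : {x // ¬ x ∈ T} => (j : Fin N))
        + (P.submatrix (fun i : {x // x ∈ T} => (i : Fin N)) (fun j : {x // ¬ x ∈ T} => (j : Fin N)))ᴴ
          * (P.submatrix (fun i : {x // x ∈ T} => (i : Fin N)) (fun j : {x // x ∈ T} => (j : Fin N)))⁻¹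
          * (P.submatrix (fun i : {x // x ∈ T} => (i : Fin N)) (fun j : {x // ¬ x ∈ T} => (j : Fin N)))) := by
    rw [hC, invOf_eq_nonsing_inv]
    have h1 : (1 - P).submatrix (fun i : {x // ¬ x ∈ T} => (i : Fin N)) (fun j : {x // ¬ x ∈ T} => (j : Fin N))
        = 1 - P.submatrix (fun i : {x // ¬ x ∈ T} => (i : Fin N)) (fun j : {x // ¬ x ∈ T} => (j : Fin N)) := by
      ext i j
      by_cases h : (i : {x // ¬ x ∈ T}) = j
      · subst h; simp [Matrix.sub_apply, Matrix.one_apply]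
      · have hne : (i : Fin N) ≠ (j : Fin N) := fun hc => h (Subtype.ext hc)
        simp [Matrix.sub_apply, Matrix.one_apply, h, hne]
    rw [h1]
    abel
  have hmcard : Fintype.card {x // ¬ x ∈ T} = m := by
    rw [hm, Fintype.card_subtype]
  rw [hdetP, hSchur, Matrix.det_neg, hmcard]
  have hre : ∀ a b : ℂ, (-1 : ℂ)^m * (a * ((-1)^m * b)) = ((-1 : ℂ)^m * (-1)^m) * (a * b) := by
    intro a b; ring
  rw [hre, ← mul_pow]
  simp only [neg_mul, one_mul, neg_neg, one_pow]
  exact mul_pos hA₁PD.det_pos hWPD.det_pos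

lemma mix_det_nonneg (K : Matrix (Fin N) (Fin N) ℂ) (hK : K.PosSemidef)
    (hK1 : (1 - K).PosSemidef) (T : Finset (Fin N)) :
    ∃ r : ℝ, 0 ≤ r ∧ (mixM K T).det = (r : ℂ) := by
  set m := (Finset.univ.filter (fun i : Fin N => ¬ i ∈ T)).card with hm
  -- factorization of the determinant
  have hfact : ∀ P : Matrix (Fin N) (Fin N) ℂ,
      (mixM P T).det
        = (-1 : ℂ)^m * (P - Matrix.diagonal (fun i => if i ∈ T then (0:ℂ) else 1)).det := by
    intro P
    have hE : (mixM P T)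
        = Matrix.diagonal (fun i => if i ∈ T then (1:ℂ) else -1)
          * (P - Matrix.diagonal (fun i => if i ∈ T then (0:ℂ) else 1)) := by
      ext i j
      rw [Matrix.diagonal_mul]
      by_cases hi : i ∈ T
      · simp [mixM, hi, Matrix.diagonal_apply, Matrix.sub_apply]
      · by_cases h : i = j
        · subst h
          simp [mixM, hi, Matrix.diagonal_apply, Matrix.sub_apply, Matrix.one_apply]
          try ring
        · simp [mixM, hi, h, Matrix.diagonal_apply, Matrix.sub_apply, Matrix.one_apply]
    rw [hE, Matrix.det_mul, Matrix.det_diagonal]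
    congr 1
    rw [← Finset.prod_filter_mul_prod_filter_not Finset.univ (· ∈ T)]
    rw [Finset.prod_congr rfl (fun i hi => if_pos (Finset.mem_filter.mp hi).2),
      Finset.prod_congr rfl (fun i hi => if_neg (Finset.mem_filter.mp hi).2)]
    simp [hm]
  -- perturbed kernels
  have hKpPD : ∀ ε : ℝ, ε ∈ Set.Ioo (0:ℝ) 1 →
      ((((1 - ε : ℝ)) : ℂ) • K + (((ε/2 : ℝ)) : ℂ) • (1 : Matrix (Fin N) (Fin N) ℂ)).PosDef := by
    intro ε hε
    exact Matrix.PosDef.posSemidef_add (posSemidef_real_smul hK (by linarith [hε.2]))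
      (posDef_real_smul_one (by linarith [hε.1]))
  have hKpPD1 : ∀ ε : ℝ, ε ∈ Set.Ioo (0:ℝ) 1 →
      (1 - ((((1 - ε : ℝ)) : ℂ) • K + (((ε/2 : ℝ)) : ℂ) • (1 : Matrix (Fin N) (Fin N) ℂ))).PosDef := by
    intro ε hε
    have heq : 1 - ((((1 - ε : ℝ)) : ℂ) • K + (((ε/2 : ℝ)) : ℂ) • (1 : Matrix (Fin N) (Fin N) ℂ))
        = (((1 - ε : ℝ)) : ℂ) • (1 - K)
          + (((ε/2 : ℝ)) : ℂ) • (1 : Matrix (Fin N) (Fin N) ℂ) := by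
      ext i j
      by_cases h : i = j <;>
        simp [Matrix.sub_apply, Matrix.one_apply, Matrix.smul_apply, Matrix.add_apply, h] <;>
        push_cast <;> ring
    rw [heq]
    exact Matrix.PosDef.posSemidef_add (posSemidef_real_smul hK1 (by linarith [hε.2]))
      (posDef_real_smul_one (by linarith [hε.1]))
  have hpos : ∀ ε : ℝ, ε ∈ Set.Ioo (0:ℝ) 1 →
      0 < (-1 : ℂ)^m * (((((1 - ε : ℝ)) : ℂ) • K + (((ε/2 : ℝ)) : ℂ) • (1 : Matrix (Fin N) (Fin N) ℂ))
        - Matrix.diagonal (fun i => if i ∈ T then (0:ℂ) else 1)).det :=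
    fun ε hε => sign_det_sub_proj_pos _ (hKpPD ε hε) (hKpPD1 ε hε) T
  -- limit argument
  set F : ℝ → ℂ := fun ε => (-1 : ℂ)^m
    * (((((1 - ε : ℝ)) : ℂ) • K + (((ε/2 : ℝ)) : ℂ) • (1 : Matrix (Fin N) (Fin N) ℂ))
        - Matrix.diagonal (fun i => if i ∈ T then (0:ℂ) else 1)).det with hF
  have hFcont : Continuous F := by
    apply Continuous.mul continuous_const
    apply Continuous.matrix_det
    apply Continuous.sub _ continuous_const
    apply Continuous.add
    · exact (Complex.continuous_ofReal.comp (by continuity)).smul continuous_const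
    · exact (Complex.continuous_ofReal.comp (by continuity)).smul continuous_const
  have hmem : Set.Ioo (0:ℝ) 1 ∈ nhdsWithin (0:ℝ) (Set.Ioi 0) :=
    Ioo_mem_nhdsGT_of_mem ⟨le_refl 0, zero_lt_one⟩
  have htends : Filter.Tendsto F (nhdsWithin (0:ℝ) (Set.Ioi 0)) (nhds (F 0)) :=
    (hFcont.tendsto 0).mono_left nhdsWithin_le_nhds
  have hre : 0 ≤ (F 0).re := by
    apply ge_of_tendsto ((Complex.continuous_re.tendsto _).comp htends)
    filter_upwards [hmem] with ε hε
    exact le_of_lt ((Complex.lt_def.mp (hpos ε hε)).1)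
  have him : (F 0).im = 0 := by
    have h1 : Filter.Tendsto (fun ε => (F ε).im) (nhdsWithin (0:ℝ) (Set.Ioi 0))
        (nhds ((F 0).im)) := (Complex.continuous_im.tendsto _).comp htends
    have h2 : Filter.Tendsto (fun ε => (F ε).im) (nhdsWithin (0:ℝ) (Set.Ioi 0)) (nhds 0) := by
      apply Filter.Tendsto.congr' _ tendsto_const_nhds
      filter_upwards [hmem] with ε hε
      exact ((Complex.lt_def.mp (hpos ε hε)).2)
    exact tendsto_nhds_unique h1 h2
  refine ⟨(F 0).re, hre, ?_⟩
  have hF0 : (mixM K T).det = F 0 := by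
    rw [hF]
    have : ((((1 - (0:ℝ) : ℝ)) : ℂ) • K + ((((0:ℝ)/2 : ℝ)) : ℂ) • (1 : Matrix (Fin N) (Fin N) ℂ)) = K := by
      norm_num
    show (mixM K T).det = (-1 : ℂ)^m * ((((1 - (0:ℝ) : ℝ)) : ℂ) • K + ((((0:ℝ)/2 : ℝ)) : ℂ) • (1 : Matrix (Fin N) (Fin N) ℂ) - Matrix.diagonal (fun i => if i ∈ T then (0:ℂ) else 1)).det
    rw [this]
    exact hfact K
  rw [hF0]
  exact (Complex.ext (by simp) (by simp [him])).symm

lemma dppSubmatrix_empty_det (K : Matrix (Fin N) (Fin N) ℂ) :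
    (dppSubmatrix K ∅).det = 1 := Matrix.det_isEmpty

lemma posSemidef_of_minors_nonneg (M : Matrix (Fin N) (Fin N) ℂ) (hM : M.IsHermitian)
    (h : ∀ A : Finset (Fin N), ∃ r : ℝ, 0 ≤ r ∧ (dppSubmatrix M A).det = (r : ℂ)) :
    M.PosSemidef := by
  apply hM.posSemidef_iff_eigenvalues_nonneg.mpr
  intro i
  show 0 ≤ hM.eigenvalues i
  by_contra hneg
  push_neg at hneg
  set t : ℝ := -hM.eigenvalues i with ht
  have htpos : 0 < t := by simp [ht]; linarith
  -- determinant of M + t•1 is zero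
  have hU : (hM.eigenvectorUnitary : Matrix (Fin N) (Fin N) ℂ)
      * star (hM.eigenvectorUnitary : Matrix (Fin N) (Fin N) ℂ) = 1 :=
    Matrix.mem_unitaryGroup_iff.mp hM.eigenvectorUnitary.2
  have hdet0 : (M + (t : ℂ) • (1 : Matrix (Fin N) (Fin N) ℂ)).det = 0 := by
    have hspec : M + (t : ℂ) • (1 : Matrix (Fin N) (Fin N) ℂ)
        = (hM.eigenvectorUnitary : Matrix (Fin N) (Fin N) ℂ)
          * (Matrix.diagonal ((RCLike.ofReal ∘ hM.eigenvalues)) + (t : ℂ) • 1)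
          * star (hM.eigenvectorUnitary : Matrix (Fin N) (Fin N) ℂ) := by
      conv_lhs => rw [hM.spectral_theorem]
      rw [Matrix.mul_add, Matrix.add_mul]
      congr 1
      rw [Matrix.mul_smul, Matrix.smul_mul, Matrix.mul_one, hU]
    rw [hspec, Matrix.det_mul, Matrix.det_mul, mul_comm, ← mul_assoc, mul_comm (Matrix.det _),
      ← Matrix.det_mul, hU, Matrix.det_one, one_mul]
    have hdiag : Matrix.diagonal ((RCLike.ofReal ∘ hM.eigenvalues)) + (t : ℂ) • (1 : Matrix (Fin N) (Fin N) ℂ)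
        = Matrix.diagonal (fun j => ((hM.eigenvalues j : ℝ) : ℂ) + (t : ℂ)) := by
      ext a b
      by_cases hab : a = b <;>
        simp [Matrix.diagonal_apply, Matrix.one_apply, hab, Function.comp]
    rw [hdiag, Matrix.det_diagonal]
    apply Finset.prod_eq_zero (Finset.mem_univ i)
    rw [ht]
    push_cast
    ring
  -- but the determinant is a positive real number
  choose r hr using h
  have hsum : (M + (t : ℂ) • (1 : Matrix (Fin N) (Fin N) ℂ)).det
      = ((∑ s : Finset (Fin N), t ^ (N - s.card) * r s : ℝ) : ℂ) := by
    rw [det_add_smul_one]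
    push_cast
    exact Finset.sum_congr rfl fun s _ => by rw [(hr s).2]
  have hrempty : r ∅ = 1 := by
    have := (hr ∅).2
    rw [dppSubmatrix_empty_det] at this
    exact_mod_cast this.symm
  have hpos : 0 < ∑ s : Finset (Fin N), t ^ (N - s.card) * r s := by
    apply Finset.sum_pos' (fun s _ => mul_nonneg (pow_nonneg htpos.le _) (hr s).1)
    exact ⟨∅, Finset.mem_univ _, by
      rw [hrempty, mul_one]
      exact pow_pos htpos _⟩
  rw [hsum] at hdet0
  exact absurd hdet0 (by exact_mod_cast ne_of_gt hpos)

end MacchiSoshnikovAux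

/-- **Discrete Macchi–Soshnikov theorem.** For a Hermitian `N × N` complex matrix `K`,
there exists a determinantal point process on `{1,…,N}` with kernel `K` — that is, a
probability distribution `μ` on subsets `S ⊆ {1,…,N}` with `P(A ⊆ S) = det K_A` for all `A` —
if and only if `0 ≼ K ≼ I` in the positive semidefinite order. -/
theorem macchi_soshnikov_discrete {N : ℕ} (K : Matrix (Fin N) (Fin N) ℂ)
    (hK : K.IsHermitian) :
    (∃ μ : Finset (Fin N) → ℝ,
      (∀ A, 0 ≤ μ A) ∧ (∑ A : Finset (Fin N), μ A) = 1 ∧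
      ∀ A : Finset (Fin N),
        ((∑ S ∈ Finset.univ.filter (fun S => A ⊆ S), μ S : ℝ) : ℂ)
          = (dppSubmatrix K A).det)
    ↔ (K.PosSemidef ∧ (1 - K).PosSemidef) := by
  constructor
  · rintro ⟨μ, hnn, _, hdet⟩
    have hEq : ∀ T : Finset (Fin N), (mixM K T).det = ((μ T : ℝ) : ℂ) := by
      apply mobius_eq
      intro A
      rw [sum_mix_superset K A, ← hdet A]
      push_cast
      rfl
    constructor
    · apply posSemidef_of_minors_nonneg K hK
      intro A
      refine ⟨∑ S ∈ Finset.univ.filter (fun S => A ⊆ S), μ S,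
        Finset.sum_nonneg fun S _ => hnn S, ?_⟩
      exact (hdet A).symm
    · have hherm : (1 - K).IsHermitian := (Matrix.isHermitian_one).sub hK
      apply posSemidef_of_minors_nonneg _ hherm
      intro A
      refine ⟨∑ S ∈ Finset.univ.filter (fun S => A ⊆ S), μ Sᶜ,
        Finset.sum_nonneg fun S _ => hnn _, ?_⟩
      rw [← sum_mix_superset (1 - K) A]
      push_cast
      exact Finset.sum_congr rfl fun S _ => by rw [mixM_one_sub, hEq]
  · rintro ⟨hpsd, hpsd1⟩
    choose r hr using fun T => mix_det_nonneg K hpsd hpsd1 T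
    have hsum : ∀ A : Finset (Fin N),
        ((∑ S ∈ Finset.univ.filter (fun S => A ⊆ S), r S : ℝ) : ℂ)
          = (dppSubmatrix K A).det := by
      intro A
      rw [← sum_mix_superset K A]
      push_cast
      exact Finset.sum_congr rfl fun S _ => ((hr S).2).symm
    refine ⟨r, fun A => (hr A).1, ?_, hsum⟩
    have h0 := hsum ∅
    rw [dppSubmatrix_empty_det,
      Finset.filter_true_of_mem (fun S _ => Finset.empty_subset S)] at h0
    exact_mod_cast h0
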